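/- Let B and F be tournaments and let B[F] be the lexicographic substitution tournament with vertex set V(B) × V(F), where (b,f) → (b',f') iff b → b' in B, or b = b' and f → f' in F. Then tr(B[F]) = tr(B) · tr(F). -/
import Mathlib


open Finset

attribute [local instance] Classical.propDecidable

/-- A tournament on vertex set `Fin n`: for every pair of distinct vertices exactly one
direction is present, and no vertex is adjacent to itself. -/
structure Tournament where
  n : ℕ
  adj : Fin n → Fin n → Prop
  asymm : ∀ u v, adj u v → ¬ adj v u
  total : ∀ u v, u ≠ v → adj u v ∨ adj v u

namespace Tournament

/-- `S` is a transitive set: the adjacency relation restricted to `S` is a strict linear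
order (by the tournament axioms this is equivalent to transitivity on `S`). -/
def IsTransitiveSet (T : Tournament) (S : Finset (Fin T.n)) : Prop :=
  ∀ a ∈ S, ∀ b ∈ S, ∀ c ∈ S, T.adj a b → T.adj b c → T.adj a c

/-- `tr T`: the maximum size of a transitive subset of the vertices of `T`. -/
noncomputable def transNum (T : Tournament) : ℕ :=
  sSup {m | ∃ S : Finset (Fin T.n), T.IsTransitiveSet S ∧ S.card = m}

/-- `T` contains an induced copy of `H`. -/
def Contains (T H : Tournament) : Prop :=
  ∃ f : Fin H.n → Fin T.n, Function.Injective f ∧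
    ∀ u v : Fin H.n, H.adj u v ↔ T.adj (f u) (f v)

/-- `T` is `H`-free: no set of vertices of `T` induces a subtournament isomorphic to `H`. -/
def HFree (T H : Tournament) : Prop := ¬ T.Contains H

/-- `S` is a homogeneous set of `T`. -/
def IsHomogeneous (T : Tournament) (S : Finset (Fin T.n)) : Prop :=
  ∀ v, v ∉ S → (∀ s ∈ S, T.adj v s) ∨ (∀ s ∈ S, T.adj s v)

/-- A tournament is prime if it has no nontrivial homogeneous set. -/
def IsPrime (T : Tournament) : Prop :=
  ¬ ∃ S : Finset (Fin T.n), T.IsHomogeneous S ∧ 1 < S.card ∧ S.card < T.n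

/-- The backward-edge graph of `T` under the ordering `σ` (where `σ p` is the vertex in
position `p`): `u` and `v` are joined iff the tournament edge between them goes from the
later position to the earlier one. -/
def backAdj (T : Tournament) (σ : Equiv.Perm (Fin T.n)) (u v : Fin T.n) : Prop :=
  (σ.symm u < σ.symm v ∧ T.adj v u) ∨ (σ.symm v < σ.symm u ∧ T.adj u v)

/-- `σ` is a galaxy ordering of `T` with center assignment `ctr` (mapping each vertex to the
center of its star component, centers and singletons being fixed points): every backward edge
joins a leaf to its center, each star is a left star or a right star, and no center of a star
lies between two leaves of another star. -/
def IsGalaxyOrdering (T : Tournament) (σ : Equiv.Perm (Fin T.n))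
    (ctr : Fin T.n → Fin T.n) : Prop :=
  (∀ v, ctr (ctr v) = ctr v) ∧
  (∀ v, ctr v ≠ v → T.backAdj σ v (ctr v)) ∧
  (∀ u v, T.backAdj σ u v → (ctr u = u ∧ ctr v = u) ∨ (ctr v = v ∧ ctr u = v)) ∧
  (∀ c, ctr c = c →
    (∀ v, ctr v = c → v = c ∨ σ.symm v < σ.symm c) ∨
    (∀ v, ctr v = c → v = c ∨ σ.symm c < σ.symm v)) ∧
  (∀ c, ctr c = c → (∃ v, v ≠ c ∧ ctr v = c) →
    ∀ l₁ l₂, l₁ ≠ ctr l₁ → l₂ ≠ ctr l₂ → ctr l₁ = ctr l₂ → ctr l₁ ≠ c →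
      ¬ (σ.symm l₁ < σ.symm c ∧ σ.symm c < σ.symm l₂))

/-- A tournament is a galaxy if it admits a galaxy ordering. -/
def IsGalaxy (T : Tournament) : Prop := ∃ σ ctr, T.IsGalaxyOrdering σ ctr

/-- A tournament is a star: it has an ordering of its vertices under which the backward-edge
graph is connected and is a star `K_{1,t}` whose center comes before all its leaves or after
all its leaves. -/
def IsStar (T : Tournament) : Prop :=
  ∃ (σ : Equiv.Perm (Fin T.n)) (c : Fin T.n),
    (∀ v, v ≠ c → T.backAdj σ c v) ∧
    (∀ u v, T.backAdj σ u v → u = c ∨ v = c) ∧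
    ((∀ v, v ≠ c → σ.symm c < σ.symm v) ∨ (∀ v, v ≠ c → σ.symm v < σ.symm c))

/-- `P` is a partition of the vertex set of `T` into transitive sets. -/
def IsTransPartition (T : Tournament) (P : Finset (Finset (Fin T.n))) : Prop :=
  (∀ S ∈ P, T.IsTransitiveSet S) ∧ ∀ v : Fin T.n, ∃! S, S ∈ P ∧ v ∈ S

/-- The chromatic number of `T`: the least number of parts in a partition of the vertices of
`T` into transitive sets. -/
noncomputable def chromaticNum (T : Tournament) : ℕ :=
  sInf {m | ∃ P : Finset (Finset (Fin T.n)), T.IsTransPartition P ∧ P.card = m}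

/-- The directed density from `X` to `Y`. -/
noncomputable def density (T : Tournament) (X Y : Finset (Fin T.n)) : ℝ :=
  (((X ×ˢ Y).filter fun p => T.adj p.1 p.2).card : ℝ) / ((X.card : ℝ) * (Y.card : ℝ))

/-- Common part of the definitions of l-sequences and m-sequences: pairwise disjoint
nonempty sets with density at least `1 - lam` forwards. -/
def SeqBase (T : Tournament) (lam : ℝ) (m : ℕ) (S : Fin m → Finset (Fin T.n)) : Prop :=
  (∀ i, (S i).Nonempty) ∧ (∀ i j, i ≠ j → Disjoint (S i) (S j)) ∧
  ∀ i j : Fin m, i < j → 1 - lam ≤ T.density (S i) (S j)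

/-- A `(c, lam)`-l-sequence: every set is `c`-linear. -/
def IsLSeq (T : Tournament) (c lam : ℝ) (m : ℕ) (S : Fin m → Finset (Fin T.n)) : Prop :=
  T.SeqBase lam m S ∧ ∀ i, c * (T.n : ℝ) ≤ ((S i).card : ℝ)

/-- A `(c₁, c₂, lam, eps)`-m-sequence: sets in odd positions (even `0`-based indices) are
`c₂`-linear, sets in even positions are transitive and `(c₁, eps)`-big. -/
def IsMSeq (T : Tournament) (c₁ c₂ lam eps : ℝ) (m : ℕ)
    (S : Fin m → Finset (Fin T.n)) : Prop :=
  T.SeqBase lam m S ∧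
  (∀ i : Fin m, (i : ℕ) % 2 = 0 → c₂ * (T.n : ℝ) ≤ ((S i).card : ℝ)) ∧
  (∀ i : Fin m, (i : ℕ) % 2 = 1 →
    T.IsTransitiveSet (S i) ∧ c₁ * (T.n : ℝ) ^ eps ≤ ((S i).card : ℝ))

/-- A sequence of sets is smooth if the `1 - lam` density condition holds pointwise. -/
def Smooth (T : Tournament) (lam : ℝ) (m : ℕ) (S : Fin m → Finset (Fin T.n)) : Prop :=
  ∀ i j : Fin m, i < j →
    (∀ v ∈ S i, 1 - lam ≤ T.density {v} (S j)) ∧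
    (∀ v ∈ S j, 1 - lam ≤ T.density (S i) {v})

/-- `P` is a partition of the vertex set of `T` into homogeneous sets. -/
def IsHomogeneousPartition (T : Tournament) (P : Finset (Finset (Fin T.n))) : Prop :=
  (∀ A ∈ P, A.Nonempty ∧ T.IsHomogeneous A) ∧ ∀ v : Fin T.n, ∃! A, A ∈ P ∧ v ∈ A

/-- `p T`: the least number of parts of a nontrivial homogeneous partition. -/
noncomputable def partNum (T : Tournament) : ℕ :=
  sInf {m | ∃ P : Finset (Finset (Fin T.n)),
    T.IsHomogeneousPartition P ∧ 1 < P.card ∧ P.card = m}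

/-- `T` is `H`-far: for every nontrivial homogeneous partition `P` of the vertices of `H`,
`T` contains no subtournament isomorphic to the quotient tournament `H_P`. -/
def HFar (T H : Tournament) : Prop :=
  ∀ P : Finset (Finset (Fin H.n)), H.IsHomogeneousPartition P → 1 < P.card →
    ¬ ∃ g : {A // A ∈ P} → Fin T.n, Function.Injective g ∧
        ∀ A B : {A // A ∈ P}, A ≠ B →
          ((∀ a ∈ A.1, ∀ b ∈ B.1, H.adj a b) ↔ T.adj (g A) (g B))

end Tournament

open Tournament

/-- Let B and F be tournaments and B[F] the lexicographic substitution
tournament on V(B) × V(F), with (b,f) → (b',f') iff b → b' in B, or b = b' and f → f' in F.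
Then tr(B[F]) = tr(B)·tr(F). Auxiliary lemmas follow; the theorem is below. -/
lemma trans_bddAbove (T : Tournament) :
    BddAbove {m | ∃ S : Finset (Fin T.n), T.IsTransitiveSet S ∧ S.card = m} := by
  refine ⟨T.n, fun m hm => ?_⟩
  obtain ⟨S, _, rfl⟩ := hm
  simpa using S.card_le_univ

lemma transNum_mem (T : Tournament) :
    ∃ S : Finset (Fin T.n), T.IsTransitiveSet S ∧ S.card = T.transNum := by
  have hne : {m | ∃ S : Finset (Fin T.n), T.IsTransitiveSet S ∧ S.card = m}.Nonempty :=
    ⟨0, ∅, fun a ha => absurd ha (Finset.notMem_empty a), Finset.card_empty⟩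
  exact Nat.sSup_mem hne (trans_bddAbove T)

lemma le_transNum (T : Tournament) (S : Finset (Fin T.n)) (hS : T.IsTransitiveSet S) :
    S.card ≤ T.transNum :=
  le_csSup (trans_bddAbove T) ⟨S, hS, rfl⟩

/-- Let B and F be tournaments and B[F] the lexicographic substitution
tournament on V(B) × V(F), with (b,f) → (b',f') iff b → b' in B, or b = b' and f → f' in F.
Then tr(B[F]) = tr(B)·tr(F). (Formalized for any tournament G isomorphic to B[F].) -/
theorem stmt17 (B F G : Tournament) (e : Fin G.n ≃ Fin B.n × Fin F.n)
    (he : ∀ x y : Fin G.n, G.adj x y ↔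
      (B.adj (e x).1 (e y).1 ∨ ((e x).1 = (e y).1 ∧ F.adj (e x).2 (e y).2))) :
    G.transNum = B.transNum * F.transNum := by
  apply le_antisymm
  · -- upper bound: any transitive set of G has card ≤ trB * trF
    obtain ⟨S, hS, hcS⟩ := transNum_mem G
    rw [← hcS]
    set S' : Finset (Fin B.n × Fin F.n) := S.image e with hS'
    have hcard : S.card = S'.card := (Finset.card_image_of_injective S e.injective).symm
    rw [hcard]
    set base : Finset (Fin B.n) := S'.image Prod.fst with hbase
    have hsum : S'.card = ∑ b ∈ base, (S'.filter (fun p => p.1 = b)).card :=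
      Finset.card_eq_sum_card_fiberwise (fun p hp => Finset.mem_image_of_mem _ hp)
    -- membership helper
    have hmemS' : ∀ p ∈ S', ∃ x ∈ S, e x = p := by
      intro p hp
      simpa [hS', Finset.mem_image] using hp
    -- base is transitive in B
    have hbaseT : B.IsTransitiveSet base := by
      intro b1 hb1 b2 hb2 b3 hb3 h12 h23
      simp only [hbase, Finset.mem_image] at hb1 hb2 hb3
      obtain ⟨p1, hp1, hp1'⟩ := hb1
      obtain ⟨p2, hp2, hp2'⟩ := hb2
      obtain ⟨p3, hp3, hp3'⟩ := hb3
      obtain ⟨x1, hx1, rfl⟩ := hmemS' p1 hp1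
      obtain ⟨x2, hx2, rfl⟩ := hmemS' p2 hp2
      obtain ⟨x3, hx3, rfl⟩ := hmemS' p3 hp3
      have g12 : G.adj x1 x2 := (he x1 x2).2 (Or.inl (by rw [hp1', hp2']; exact h12))
      have g23 : G.adj x2 x3 := (he x2 x3).2 (Or.inl (by rw [hp2', hp3']; exact h23))
      have g13 := hS x1 hx1 x2 hx2 x3 hx3 g12 g23
      rcases (he x1 x3).1 g13 with h | ⟨heq, _⟩
      · rwa [hp1', hp3'] at h
      · exfalso
        rw [hp1', hp3'] at heq
        rw [heq] at h12
        exact B.asymm _ _ h12 h23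
    have hbasec : base.card ≤ B.transNum := le_transNum B base hbaseT
    -- each fiber has card ≤ trF
    have hfib : ∀ b ∈ base, (S'.filter (fun p => p.1 = b)).card ≤ F.transNum := by
      intro b _
      set fib := S'.filter (fun p => p.1 = b) with hfibdef
      have hinj : Set.InjOn Prod.snd (fib : Set (Fin B.n × Fin F.n)) := by
        intro p hp q hq hpq
        have hp1 : p.1 = b := (Finset.mem_filter.1 hp).2
        have hq1 : q.1 = b := (Finset.mem_filter.1 hq).2
        exact Prod.ext (hp1.trans hq1.symm) hpq
      have hcf : fib.card = (fib.image Prod.snd).card :=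
        (Finset.card_image_of_injOn hinj).symm
      rw [hcf]
      apply le_transNum
      intro f1 hf1 f2 hf2 f3 hf3 h12 h23
      simp only [Finset.mem_image] at hf1 hf2 hf3
      obtain ⟨p1, hp1, hp1'⟩ := hf1
      obtain ⟨p2, hp2, hp2'⟩ := hf2
      obtain ⟨p3, hp3, hp3'⟩ := hf3
      have hb1 : p1.1 = b := (Finset.mem_filter.1 hp1).2
      have hb2 : p2.1 = b := (Finset.mem_filter.1 hp2).2
      have hb3 : p3.1 = b := (Finset.mem_filter.1 hp3).2
      obtain ⟨x1, hx1, rfl⟩ := hmemS' p1 (Finset.mem_filter.1 hp1).1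
      obtain ⟨x2, hx2, rfl⟩ := hmemS' p2 (Finset.mem_filter.1 hp2).1
      obtain ⟨x3, hx3, rfl⟩ := hmemS' p3 (Finset.mem_filter.1 hp3).1
      have g12 : G.adj x1 x2 := (he x1 x2).2
        (Or.inr ⟨hb1.trans hb2.symm, by rw [hp1', hp2']; exact h12⟩)
      have g23 : G.adj x2 x3 := (he x2 x3).2
        (Or.inr ⟨hb2.trans hb3.symm, by rw [hp2', hp3']; exact h23⟩)
      have g13 := hS x1 hx1 x2 hx2 x3 hx3 g12 g23
      rcases (he x1 x3).1 g13 with h | ⟨_, h⟩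
      · exfalso
        rw [hb1, hb3] at h
        exact B.asymm _ _ h h
      · rwa [hp1', hp3'] at h
    calc S'.card = ∑ b ∈ base, (S'.filter (fun p => p.1 = b)).card := hsum
      _ ≤ ∑ _b ∈ base, F.transNum := Finset.sum_le_sum hfib
      _ = base.card * F.transNum := by rw [Finset.sum_const, smul_eq_mul]
      _ ≤ B.transNum * F.transNum := Nat.mul_le_mul_right _ hbasec
  · -- lower bound: product of transitive sets
    obtain ⟨SB, hSB, hcB⟩ := transNum_mem B
    obtain ⟨SF, hSF, hcF⟩ := transNum_mem F
    set S : Finset (Fin G.n) := (SB ×ˢ SF).image e.symm with hSdef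
    have hmem : ∀ x : Fin G.n, x ∈ S ↔ (e x).1 ∈ SB ∧ (e x).2 ∈ SF := by
      intro x
      simp only [hSdef, Finset.mem_image, Finset.mem_product]
      constructor
      · rintro ⟨p, hp, rfl⟩; simpa using hp
      · intro h; exact ⟨e x, h, e.symm_apply_apply x⟩
    have hcard : S.card = B.transNum * F.transNum := by
      rw [hSdef, Finset.card_image_of_injective _ e.symm.injective,
        Finset.card_product, hcB, hcF]
    have hTrans : G.IsTransitiveSet S := by
      intro x1 hx1 x2 hx2 x3 hx3 h12 h23
      rw [hmem] at hx1 hx2 hx3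
      rw [he] at h12 h23 ⊢
      rcases h12 with h12 | ⟨hq12, hf12⟩ <;> rcases h23 with h23 | ⟨hq23, hf23⟩
      · exact Or.inl (hSB _ hx1.1 _ hx2.1 _ hx3.1 h12 h23)
      · exact Or.inl (hq23 ▸ h12)
      · exact Or.inl (hq12 ▸ h23)
      · exact Or.inr ⟨hq12.trans hq23, hSF _ hx1.2 _ hx2.2 _ hx3.2 hf12 hf23⟩
    rw [← hcard]
    exact le_transNum G S hTrans
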